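/- Let E be a real normed vector space, U ⊆ E open, and Φ : E → ℍ twice continuously differentiable on U with re(Φ x) = 0 and ‖Φ x‖ = 1 for every x ∈ U. Let α : E → (E →L[ℝ] ℝ) be continuously differentiable on U. Define A x v := −(1/2) • (Φ x * (fderiv ℝ Φ x v)) + (α x v) • Φ x, and define the curvature F x (v, w) := fderiv ℝ (fun y => A y w) x v − fderiv ℝ (fun y => A y v) x w + (A x v) * (A x w) − (A x w) * (A x v). Then for every x ∈ U and v, w ∈ E: F x (v, w) = −(1/4) • ((fderiv ℝ Φ x v) * (fderiv ℝ Φ x w) − (fderiv ℝ Φ x w) * (fderiv ℝ Φ x v)) + (fderiv ℝ (fun y => α y w) x v − fderiv ℝ (fun y => α y v) x w) • Φ x; that is, F_A = −(1/4) dΦ ∧ dΦ + Φ dα. -/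

import Mathlib

private lemma quat_key (q P Q S : Quaternion ℝ) (a b c d : ℝ)
    (hq : q * q = -1) (hP : q * P = -(P * q)) (hQ : q * Q = -(Q * q)) :
    ((-(1/2:ℝ) • (q * S + P * Q) + (c • q + b • P))
        - (-(1/2:ℝ) • (q * S + Q * P) + (d • q + a • Q)))
      + (-(1/2:ℝ) • (q*P) + a • q) * (-(1/2:ℝ) • (q*Q) + b • q)
      - (-(1/2:ℝ) • (q*Q) + b • q) * (-(1/2:ℝ) • (q*P) + a • q)
    = -(1/4:ℝ) • (P*Q - Q*P) + (c - d) • q := by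
  have h1 : (q*P)*(q*Q) = P*Q := by
    rw [hP, neg_mul, mul_assoc, ← mul_assoc q q Q, hq, neg_one_mul, mul_neg, neg_neg]
  have h2 : (q*Q)*(q*P) = Q*P := by
    rw [hQ, neg_mul, mul_assoc, ← mul_assoc q q P, hq, neg_one_mul, mul_neg, neg_neg]
  have h3 : (q*P)*q = P := by
    rw [hP, neg_mul, mul_assoc, hq, mul_neg_one, neg_neg]
  have h4 : (q*Q)*q = Q := by
    rw [hQ, neg_mul, mul_assoc, hq, mul_neg_one, neg_neg]
  have h5 : q*(q*P) = -P := by rw [← mul_assoc, hq, neg_one_mul]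
  have h6 : q*(q*Q) = -Q := by rw [← mul_assoc, hq, neg_one_mul]
  simp only [mul_add, add_mul, smul_mul_assoc, mul_smul_comm, smul_smul,
    h1, h2, h3, h4, h5, h6, hq]
  module

/-- For a unit imaginary-quaternion-valued map `Φ` (of class `C²`) on an open set `U` and a
`C¹` real-valued one-form `α`, the curvature of the connection one-form
`A = −(1/2) Φ dΦ + Φ α` is `F_A = −(1/4) dΦ ∧ dΦ + Φ dα`. -/
theorem curvature_of_abelian_connection {E : Type*} [NormedAddCommGroup E] [NormedSpace ℝ E]
    (U : Set E) (hU : IsOpen U) (Φ : E → Quaternion ℝ)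
    (hΦ : ContDiffOn ℝ 2 Φ U)
    (hΦim : ∀ x ∈ U, (Φ x).re = 0) (hΦunit : ∀ x ∈ U, ‖Φ x‖ = 1)
    (α : E → E →L[ℝ] ℝ) (hα : ContDiffOn ℝ 1 α U)
    (A : E → E → Quaternion ℝ)
    (hA : ∀ x v, A x v = -(1 / 2 : ℝ) • (Φ x * fderiv ℝ Φ x v) + (α x v) • Φ x)
    (F : E → E × E → Quaternion ℝ)
    (hF : ∀ x v w, F x (v, w) =
      fderiv ℝ (fun y => A y w) x v - fderiv ℝ (fun y => A y v) x w
        + A x v * A x w - A x w * A x v) :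
    ∀ x ∈ U, ∀ v w : E,
      F x (v, w) =
        -(1 / 4 : ℝ) • (fderiv ℝ Φ x v * fderiv ℝ Φ x w - fderiv ℝ Φ x w * fderiv ℝ Φ x v)
          + (fderiv ℝ (fun y => α y w) x v - fderiv ℝ (fun y => α y v) x w) • Φ x := by
  intro x hx v w
  have hxU : U ∈ nhds x := hU.mem_nhds hx
  -- differentiability of Φ on U
  have hΦdiff : ∀ y ∈ U, DifferentiableAt ℝ Φ y := fun y hy =>
    (hΦ.contDiffAt (hU.mem_nhds hy)).differentiableAt (by simp)
  have hΦ' : HasFDerivAt Φ (fderiv ℝ Φ x) x := (hΦdiff x hx).hasFDerivAt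
  -- the second derivative
  have hΦ2 : ContDiffAt ℝ 2 Φ x := hΦ.contDiffAt hxU
  have hd2diff : DifferentiableAt ℝ (fderiv ℝ Φ) x :=
    (hΦ2.fderiv_right (m := 1) (by norm_num)).differentiableAt (by simp)
  have hd2 : HasFDerivAt (fderiv ℝ Φ) (fderiv ℝ (fderiv ℝ Φ) x) x := hd2diff.hasFDerivAt
  have hsymm : fderiv ℝ (fderiv ℝ Φ) x v w = fderiv ℝ (fderiv ℝ Φ) x w v := by
    refine second_derivative_symmetric_of_eventually (f := Φ) (f' := fderiv ℝ Φ) ?_ hd2 v w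
    filter_upwards [hxU] with y hy using (hΦdiff y hy).hasFDerivAt
  -- Φ y * Φ y = -1 on U
  have himsq : ∀ y ∈ U, Φ y * Φ y = -1 := by
    intro y hy
    have hstar : star (Φ y) = -(Φ y) := by
      ext <;> simp [hΦim y hy]
    have hns : (Quaternion.normSq (Φ y) : ℝ) = 1 := by
      rw [Quaternion.normSq_eq_norm_mul_self, hΦunit y hy, one_mul]
    have := Quaternion.self_mul_star (Φ y)
    rw [hstar, mul_neg, hns] at this
    have h2 : Φ y * Φ y = -((1 : ℝ) : Quaternion ℝ) := by
      rw [← this, neg_neg]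
    simpa using h2
  -- anticommutation of Φ x with derivatives
  have hzero : Φ x • fderiv ℝ Φ x + (fderiv ℝ Φ x).smulRight (Φ x) = 0 := by
    have hmulself : HasFDerivAt (fun y => Φ y * Φ y)
        (Φ x • fderiv ℝ Φ x + (fderiv ℝ Φ x).smulRight (Φ x)) x :=
      hΦ'.mul' hΦ'
    have hconst : HasFDerivAt (fun y => Φ y * Φ y) (0 : E →L[ℝ] Quaternion ℝ) x := by
      refine (hasFDerivAt_const (-1 : Quaternion ℝ) x).congr_of_eventuallyEq ?_
      exact Filter.eventuallyEq_of_mem hxU fun y hy => himsq y hy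
    exact hmulself.unique hconst
  have hanti : ∀ u : E, Φ x * fderiv ℝ Φ x u = -(fderiv ℝ Φ x u * Φ x) := by
    intro u
    have h := DFunLike.congr_fun hzero u
    simp only [ContinuousLinearMap.add_apply, ContinuousLinearMap.smul_apply,
      ContinuousLinearMap.smulRight_apply, ContinuousLinearMap.zero_apply, smul_eq_mul] at h
    exact eq_neg_of_add_eq_zero_left h
  -- derivative of α
  have hαd : DifferentiableAt ℝ α x := (hα.contDiffAt hxU).differentiableAt (by simp)
  have hαu : ∀ u : E, HasFDerivAt (fun y => α y u) (fderiv ℝ (fun y => α y u) x) x := fun u =>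
    (hαd.clm_apply (differentiableAt_const u)).hasFDerivAt
  -- derivative of A · u
  have hfAu : ∀ u v' : E, fderiv ℝ (fun y => A y u) x v' =
      -(1 / 2 : ℝ) • (Φ x * fderiv ℝ (fderiv ℝ Φ) x v' u + fderiv ℝ Φ x v' * fderiv ℝ Φ x u)
        + ((fderiv ℝ (fun y => α y u) x v') • Φ x + (α x u) • fderiv ℝ Φ x v') := by
    intro u v'
    have happ : HasFDerivAt (fun y => fderiv ℝ Φ y u)
        ((ContinuousLinearMap.apply ℝ (Quaternion ℝ) u).comp (fderiv ℝ (fderiv ℝ Φ) x)) x :=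
      (ContinuousLinearMap.apply ℝ (Quaternion ℝ) u).hasFDerivAt.comp x hd2
    have h1 := (hΦ'.mul' happ).const_smul (-(1/2:ℝ))
    have h2 := (hαu u).smul hΦ'
    have htot := h1.add h2
    have hAux : HasFDerivAt (fun y => A y u)
        ((-(1/2:ℝ) • (Φ x • ((ContinuousLinearMap.apply ℝ (Quaternion ℝ) u).comp
              (fderiv ℝ (fderiv ℝ Φ) x))
            + (fderiv ℝ Φ x).smulRight (fderiv ℝ Φ x u)))
          + ((α x u) • fderiv ℝ Φ x + (fderiv ℝ (fun y => α y u) x).smulRight (Φ x))) x :=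
      htot.congr_of_eventuallyEq (Filter.Eventually.of_forall fun y => hA y u)
    rw [hAux.fderiv]
    simp only [ContinuousLinearMap.add_apply, ContinuousLinearMap.smul_apply,
      ContinuousLinearMap.coe_smul', Pi.smul_apply, ContinuousLinearMap.smulRight_apply,
      ContinuousLinearMap.coe_comp', Function.comp_apply, ContinuousLinearMap.apply_apply,
      smul_eq_mul]
    module
  -- assemble
  rw [hF, hfAu w v, hfAu v w, hA x v, hA x w, hsymm]
  exact quat_key (Φ x) (fderiv ℝ Φ x v) (fderiv ℝ Φ x w) (fderiv ℝ (fderiv ℝ Φ) x w v)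
    (α x v) (α x w) (fderiv ℝ (fun y => α y w) x v) (fderiv ℝ (fun y => α y v) x w)
    (himsq x hx) (hanti v) (hanti w)
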